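/- If y = a + ib is a complex root of the necklace polynomial N_t (for some t ≥ 1), then the real and imaginary parts satisfy b^2·(1+a) = -a·(a^2 + a + 1); in particular, every root y satisfies -1 ≤ Re(y) ≤ 0. -/

import Mathlib

noncomputable def neckC (t : ℕ) (y : ℂ) : ℂ :=
  (1 / 2) * (1 + y) ^ t + (1 / 2) * (1 + y ^ 2) ^ (t / 2) * (1 + y) ^ (t % 2)

theorem neckC_root_curve (t : ℕ) (ht : 1 ≤ t) (y : ℂ) (hy : neckC t y = 0) :
    (y.re ≠ -1 →
      y.im ^ 2 * (1 + y.re) = -(y.re * (y.re ^ 2 + y.re + 1))) ∧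
    -1 ≤ y.re ∧ y.re ≤ 0 := by
  by_cases hym : y = -1
  · subst hym
    refine ⟨fun h => absurd (by simp) h, by simp, by simp⟩
  -- y ≠ -1
  have h1y : (1 : ℂ) + y ≠ 0 := fun h => hym (by linear_combination h)
  -- rule out t = 1
  rcases eq_or_lt_of_le ht with ht1 | ht2
  · exfalso
    apply h1y
    unfold neckC at hy
    rw [← ht1] at hy
    norm_num at hy
    linear_combination hy
  have ht2 : 2 ≤ t := ht2
  have hm1 : 1 ≤ t / 2 := Nat.one_le_div_iff (by norm_num) |>.mpr ht2
  -- modulus equation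
  have h2 : (1 + y) ^ t = -((1 + y ^ 2) ^ (t / 2) * (1 + y) ^ (t % 2)) := by
    unfold neckC at hy
    linear_combination 2 * hy
  set r : ℝ := ‖1 + y‖ with hr
  set s : ℝ := ‖1 + y ^ 2‖ with hs
  have habs : r ^ t = s ^ (t / 2) * r ^ (t % 2) := by
    have := congrArg (‖·‖) h2
    simpa [map_pow, map_mul] using this
  have hrpos : 0 < r := by
    simpa [hr] using (norm_pos_iff.mpr h1y)
  have htm : t = 2 * (t / 2) + t % 2 := (Nat.div_add_mod t 2).symm ▸ by omega
  have hkey : r ^ (2 * (t / 2)) = s ^ (t / 2) := by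
    have h3 : r ^ (2 * (t / 2)) * r ^ (t % 2) = s ^ (t / 2) * r ^ (t % 2) := by
      rw [← pow_add, ← htm]; exact habs
    exact mul_right_cancel₀ (pow_ne_zero _ hrpos.ne') h3
  have hr2s : r ^ 2 = s := by
    have h4 : (r ^ 2) ^ (t / 2) = s ^ (t / 2) := by
      rw [← pow_mul]; exact hkey
    exact (pow_left_inj₀ (by positivity) (norm_nonneg _)
      (by omega : t / 2 ≠ 0)).mp h4
  -- convert to normSq
  have hn : (Complex.normSq (1 + y)) ^ 2 = Complex.normSq (1 + y ^ 2) := by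
    have := congrArg (· ^ 2) hr2s
    simp only [hr, hs, ← Complex.sq_norm] at *
    calc (‖1 + y‖ ^ 2) ^ 2 = (‖1 + y‖ ^ 2) ^ 2 := rfl
      _ = ‖1 + y ^ 2‖ ^ 2 := by rw [hr2s]
  set a := y.re
  set b := y.im
  have hE : ((1 + a) ^ 2 + b ^ 2) ^ 2 = (1 + (a ^ 2 - b ^ 2)) ^ 2 + (2 * a * b) ^ 2 := by
    rw [Complex.normSq_apply, Complex.normSq_apply] at hn
    have hre : (1 + y ^ 2).re = 1 + (a ^ 2 - b ^ 2) := by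
      simp [Complex.add_re, pow_two, Complex.mul_re]; rfl
    have him : (1 + y ^ 2).im = 2 * a * b := by
      simp [Complex.add_im, pow_two, Complex.mul_im]; try ring
    have hre1 : (1 + y).re = 1 + a := by simp; rfl
    have him1 : (1 + y).im = b := by simp; rfl
    rw [hre, him, hre1, him1] at hn
    linear_combination hn
  have hcurve : b ^ 2 * (1 + a) = -(a * (a ^ 2 + a + 1)) := by
    linear_combination hE / 4
  refine ⟨fun _ => hcurve, ?_, ?_⟩
  · nlinarith [sq_nonneg b, sq_nonneg (2 * a + 1), sq_nonneg (b * a), sq_nonneg (a + 1)]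
  · nlinarith [sq_nonneg b, sq_nonneg (2 * a + 1), sq_nonneg (b * a), sq_nonneg a]
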